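/- Let G = (V,E) be a finite simple undirected graph, L a finite linearly ordered set of labels, and F the synchronous LPA-Max update. Then for every initial labeling ℓ the stop criterion (c2) is eventually met: there exists t ≥ 2 such that F^t(ℓ) = F^{t-1}(ℓ) or F^t(ℓ) = F^{t-2}(ℓ); hence synchronous LPA-Max run with stop criterion (c2) always terminates. -/

import Mathlib

/-- The number of neighbors of `v` that carry label `l` under the labeling `ℓ`. -/
def nbrCount {V : Type*} [Fintype V] [DecidableEq V] {L : Type*} [DecidableEq L]
    (G : SimpleGraph V) [DecidableRel G.Adj] (ℓ : V → L) (v : V) (l : L) : ℕ :=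
  ((G.neighborFinset v).filter fun u => ℓ u = l).card

/-- `l` is a plurality label at `v` under `ℓ`. -/
def IsPlurality {V : Type*} [Fintype V] [DecidableEq V] {L : Type*} [DecidableEq L]
    (G : SimpleGraph V) [DecidableRel G.Adj] (ℓ : V → L) (v : V) (l : L) : Prop :=
  ∀ l', nbrCount G ℓ v l' ≤ nbrCount G ℓ v l

instance {V : Type*} [Fintype V] [DecidableEq V] {L : Type*} [DecidableEq L] [Fintype L]
    (G : SimpleGraph V) [DecidableRel G.Adj] (ℓ : V → L) (v : V) :
    DecidablePred (IsPlurality G ℓ v) := fun l =>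
  inferInstanceAs (Decidable (∀ l', nbrCount G ℓ v l' ≤ nbrCount G ℓ v l))

/-- The synchronous LPA-Max update: simultaneously for all vertices, `ℓ v` is replaced by
the maximum (in the linear order on `L`) among the plurality labels at `v` under `ℓ`. -/
def lpaMaxUpdate {V : Type*} [Fintype V] [DecidableEq V] {L : Type*} [Fintype L]
    [LinearOrder L] (G : SimpleGraph V) [DecidableRel G.Adj] (ℓ : V → L) : V → L :=
  fun v => ((Finset.univ.filter fun l => IsPlurality G ℓ v l).max).getD (ℓ v)

section Aux

variable {V : Type*} [Fintype V] [DecidableEq V] {L : Type*} [Fintype L] [LinearOrder L]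
variable (G : SimpleGraph V) [DecidableRel G.Adj]

lemma exists_plurality (ℓ : V → L) (v : V) : ∃ l, IsPlurality G ℓ v l := by
  obtain ⟨l, -, hl⟩ := Finset.exists_max_image (Finset.univ : Finset L) (nbrCount G ℓ v)
      ⟨ℓ v, Finset.mem_univ _⟩
  exact ⟨l, fun l' => hl l' (Finset.mem_univ _)⟩

lemma plurality_set_max (ℓ : V → L) (v : V) :
    ∃ m : L, (Finset.univ.filter fun l => IsPlurality G ℓ v l).max = m ∧
      lpaMaxUpdate G ℓ v = m := by
  obtain ⟨l, hl⟩ := exists_plurality G ℓ v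
  have hne : (Finset.univ.filter fun l => IsPlurality G ℓ v l).Nonempty :=
    ⟨l, Finset.mem_filter.mpr ⟨Finset.mem_univ _, hl⟩⟩
  obtain ⟨m, hm⟩ := Finset.max_of_nonempty hne
  refine ⟨m, hm, ?_⟩
  simp only [lpaMaxUpdate, hm]
  rfl

lemma update_plurality (ℓ : V → L) (v : V) : IsPlurality G ℓ v (lpaMaxUpdate G ℓ v) := by
  obtain ⟨m, hm, he⟩ := plurality_set_max G ℓ v
  rw [he]
  exact (Finset.mem_filter.mp (Finset.mem_of_max hm)).2

lemma le_update (ℓ : V → L) (v : V) {l : L} (h : IsPlurality G ℓ v l) :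
    l ≤ lpaMaxUpdate G ℓ v := by
  obtain ⟨m, hm, he⟩ := plurality_set_max G ℓ v
  rw [he]
  have := Finset.le_max (Finset.mem_filter.mpr ⟨Finset.mem_univ l, h⟩)
  rw [hm] at this
  exact_mod_cast this

lemma nbrCount_eq_sum (ℓ : V → L) (v : V) (l : L) :
    nbrCount G ℓ v l = ∑ u : V, if G.Adj v u ∧ ℓ u = l then 1 else 0 := by
  rw [nbrCount, SimpleGraph.neighborFinset_eq_filter, Finset.filter_filter,
    Finset.card_filter]

lemma pot_symm (ℓ ℓ' : V → L) :
    ∑ v : V, nbrCount G ℓ v (ℓ' v) = ∑ v : V, nbrCount G ℓ' v (ℓ v) := by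
  simp only [nbrCount_eq_sum]
  rw [Finset.sum_comm]
  refine Finset.sum_congr rfl fun u _ => Finset.sum_congr rfl fun v _ => ?_
  have : (G.Adj v u ∧ ℓ u = ℓ' v) ↔ (G.Adj u v ∧ ℓ' v = ℓ u) := by
    rw [G.adj_comm, eq_comm]
  simp [this]

lemma nbrCount_le_card (ℓ : V → L) (v : V) (l : L) : nbrCount G ℓ v l ≤ Fintype.card V :=
  le_trans (Finset.card_le_card (Finset.filter_subset _ _)) (Finset.card_le_card
    (Finset.subset_univ _))

/-- A monotone bounded sequence of naturals is eventually constant. -/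
lemma mono_bdd_eventually_const (p : ℕ → ℕ) (hp : Monotone p) (B : ℕ) (hB : ∀ t, p t ≤ B) :
    ∃ T, ∀ t, T ≤ t → p t = p T := by
  have hbdd : BddAbove (Set.range p) := ⟨B, by rintro _ ⟨t, rfl⟩; exact hB t⟩
  obtain ⟨T, hT⟩ := Nat.sSup_mem (Set.range_nonempty p) hbdd
  exact ⟨T, fun t ht => le_antisymm (hT ▸ le_csSup hbdd ⟨t, rfl⟩) (hp ht)⟩

/-- A ℕ-valued measure on labelings that strictly increases along strict pointwise increase. -/
lemma measure_strict (g g' : V → L) (hle : ∀ v, g v ≤ g' v) (hne : g ≠ g') :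
    ∑ v : V, (Finset.univ.filter fun l => l ≤ g v).card
      < ∑ v : V, (Finset.univ.filter fun l => l ≤ g' v).card := by
  obtain ⟨v0, hv0⟩ : ∃ v, g v ≠ g' v := by
    by_contra h; push_neg at h; exact hne (funext h)
  refine Finset.sum_lt_sum (fun v _ => Finset.card_le_card
    (Finset.monotone_filter_right _ fun l _ hl => le_trans hl (hle v))) ⟨v0, Finset.mem_univ _, ?_⟩
  apply Finset.card_lt_card
  refine ⟨Finset.monotone_filter_right _ fun l _ hl => le_trans hl (hle v0), fun hsub => ?_⟩
  have := hsub (Finset.mem_filter.mpr ⟨Finset.mem_univ (g' v0), le_refl _⟩)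
  exact hv0 (le_antisymm (hle v0) (Finset.mem_filter.mp this).2)

end Aux

/-- Synchronous LPA-Max run with stop criterion (c2) always terminates: for every initial
labeling there is a step `t ≥ 2` at which the current labeling equals the labeling of the
previous step or the labeling of two steps before. -/
theorem lpaMax_stop_criterion_c2
    {V : Type*} [Fintype V] [DecidableEq V] {L : Type*} [Fintype L] [LinearOrder L]
    (G : SimpleGraph V) [DecidableRel G.Adj] (ℓ : V → L) :
    ∃ t : ℕ, 2 ≤ t ∧
      ((lpaMaxUpdate G)^[t] ℓ = (lpaMaxUpdate G)^[t - 1] ℓ ∨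
        (lpaMaxUpdate G)^[t] ℓ = (lpaMaxUpdate G)^[t - 2] ℓ) := by
  set seq : ℕ → V → L := fun t => (lpaMaxUpdate G)^[t] ℓ with hseq
  have hkey : ∀ t (v : V), IsPlurality G (seq (t + 1)) v (seq (t + 2) v) := by
    intro t v
    have h12 : seq (t + 2) = lpaMaxUpdate G (seq (t + 1)) :=
      Function.iterate_succ_apply' (lpaMaxUpdate G) (t + 1) ℓ
    rw [h12]; exact update_plurality G _ v
  -- the potential
  set p : ℕ → ℕ := fun t => ∑ v : V, nbrCount G (seq t) v (seq (t + 1) v) with hp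
  have hpmono : Monotone p := by
    apply monotone_nat_of_le_succ
    intro t
    calc p t = ∑ v : V, nbrCount G (seq (t + 1)) v (seq t v) := pot_symm G _ _
      _ ≤ ∑ v : V, nbrCount G (seq (t + 1)) v (seq (t + 2) v) :=
          Finset.sum_le_sum fun v _ => hkey t v (seq t v)
  have hpbd : ∀ t, p t ≤ Fintype.card V * Fintype.card V := by
    intro t
    calc p t ≤ ∑ _v : V, Fintype.card V :=
          Finset.sum_le_sum fun v _ => nbrCount_le_card G _ v _
      _ = Fintype.card V * Fintype.card V := by
          rw [Finset.sum_const, Finset.card_univ, smul_eq_mul]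
  obtain ⟨T, hT⟩ := mono_bdd_eventually_const p hpmono _ hpbd
  -- after stabilization, seq (t+2) dominates seq t pointwise
  have hdom : ∀ t, T ≤ t → ∀ v, seq t v ≤ seq (t + 2) v := by
    intro t ht v
    have heq : ∑ v : V, nbrCount G (seq (t + 1)) v (seq t v)
        = ∑ v : V, nbrCount G (seq (t + 1)) v (seq (t + 2) v) := by
      rw [← pot_symm G]
      show p t = p (t + 1)
      rw [hT t ht, hT (t + 1) (le_trans ht (Nat.le_succ t))]
    have hle : ∀ v ∈ (Finset.univ : Finset V),
        nbrCount G (seq (t + 1)) v (seq t v) ≤ nbrCount G (seq (t + 1)) v (seq (t + 2) v) :=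
      fun v _ => hkey t v (seq t v)
    have heach := (Finset.sum_eq_sum_iff_of_le hle).mp heq v (Finset.mem_univ v)
    -- seq t v is a plurality label at v under seq (t+1)
    have hplu : IsPlurality G (seq (t + 1)) v (seq t v) := fun l' => by
      rw [heach]; exact hkey t v l'
    have h12 : seq (t + 2) = lpaMaxUpdate G (seq (t + 1)) :=
      Function.iterate_succ_apply' (lpaMaxUpdate G) (t + 1) ℓ
    rw [h12]
    exact le_update G (seq (t + 1)) v hplu
  -- the even subsequence from T is pointwise monotone, so its measure is monotone & bounded
  set q : ℕ → ℕ := fun k =>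
    ∑ v : V, (Finset.univ.filter fun l => l ≤ seq (T + 2 * k) v).card with hq
  have hstep : ∀ k (v : V), seq (T + 2 * k) v ≤ seq (T + 2 * (k + 1)) v := by
    intro k v
    have h := hdom (T + 2 * k) (Nat.le_add_right _ _) v
    have e : T + 2 * k + 2 = T + 2 * (k + 1) := by ring
    rwa [e] at h
  have hqmono : Monotone q := by
    apply monotone_nat_of_le_succ
    intro k
    exact Finset.sum_le_sum fun v _ => Finset.card_le_card
      (Finset.monotone_filter_right _ fun l _ hl => le_trans hl (hstep k v))
  have hqbd : ∀ k, q k ≤ Fintype.card V * Fintype.card L := by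
    intro k
    calc q k ≤ ∑ _v : V, Fintype.card L :=
          Finset.sum_le_sum fun v _ => Finset.card_le_card (Finset.subset_univ _)
      _ = Fintype.card V * Fintype.card L := by
          rw [Finset.sum_const, Finset.card_univ, smul_eq_mul]
  obtain ⟨K, hK⟩ := mono_bdd_eventually_const q hqmono _ hqbd
  have hqeq : q (K + 1) = q K := hK (K + 1) (Nat.le_succ K)
  have hfix : seq (T + 2 * K) = seq (T + 2 * (K + 1)) := by
    by_contra hne
    exact absurd hqeq (Nat.ne_of_gt (measure_strict _ _ (hstep K) hne))
  refine ⟨T + 2 * K + 2, by omega, Or.inr ?_⟩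
  have h2 : T + 2 * K + 2 - 2 = T + 2 * K := by omega
  have e : T + 2 * (K + 1) = T + 2 * K + 2 := by ring
  rw [e] at hfix
  show seq (T + 2 * K + 2) = seq (T + 2 * K + 2 - 2)
  rw [h2]
  exact hfix.symm
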